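/- Axiom (R10) (Tarski's law) is independent of the remaining Tarski axioms: on a Boolean algebra with at least two elements, define relative multiplication to be Boolean addition (r;s = r+s), converse to be the identity function, and 1' = 0. Then (R1)-(R9) hold but (R10) fails (take r=s=1). -/
import Mathlib

/-- Axiom (R10) (Tarski's law) is independent of the remaining Tarski axioms:
on a Boolean algebra with at least two elements, with relative multiplication
defined as Boolean addition (r;s = r ⊔ s), converse the identity, and 1' = ⊥,
axioms (R1)-(R9) hold but (R10) fails (take r = s = ⊤). -/
theorem R10_independent {A : Type*} [BooleanAlgebra A]
    (h2 : ∃ x y : A, x ≠ y) :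
    (∀ r s : A, r ⊔ s = s ⊔ r) ∧
    (∀ r s t : A, r ⊔ (s ⊔ t) = (r ⊔ s) ⊔ t) ∧
    (∀ r s : A, (rᶜ ⊔ s)ᶜ ⊔ (rᶜ ⊔ sᶜ)ᶜ = r) ∧
    (∀ r s t : A, r ⊔ (s ⊔ t) = (r ⊔ s) ⊔ t) ∧
    (∀ r : A, r ⊔ (⊥ : A) = r) ∧
    (∀ r : A, id (id r) = r) ∧
    (∀ r s : A, id (r ⊔ s) = id s ⊔ id r) ∧
    (∀ r s t : A, (r ⊔ s) ⊔ t = (r ⊔ t) ⊔ (s ⊔ t)) ∧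
    (∀ r s : A, id (r ⊔ s) = id r ⊔ id s) ∧
    ¬ (∀ r s : A, (id r ⊔ (r ⊔ s)ᶜ) ⊔ sᶜ = sᶜ) ∧
    ¬ ((id (⊤ : A) ⊔ ((⊤ : A) ⊔ ⊤)ᶜ) ⊔ (⊤ : A)ᶜ = (⊤ : A)ᶜ) := by
  obtain ⟨x, y, hxy⟩ := h2
  have hbt : (⊤ : A) ≠ ⊥ := by
    intro h
    apply hxy
    have hx : x = ⊥ := le_antisymm (h ▸ le_top) bot_le
    have hy : y = ⊥ := le_antisymm (h ▸ le_top) bot_le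
    rw [hx, hy]
  have key : ¬ ((id (⊤ : A) ⊔ ((⊤ : A) ⊔ ⊤)ᶜ) ⊔ (⊤ : A)ᶜ = (⊤ : A)ᶜ) := by
    simp only [id, compl_top, sup_bot_eq, sup_idem]
    exact hbt
  refine ⟨fun r s => sup_comm r s, fun r s t => (sup_assoc r s t).symm, ?_,
    fun r s t => (sup_assoc r s t).symm, fun r => sup_bot_eq r, fun r => rfl,
    fun r s => sup_comm r s, ?_, fun r s => rfl, fun h => key (h ⊤ ⊤), key⟩
  · intro r s
    rw [compl_sup, compl_sup, compl_compl, ← inf_sup_left, sup_compl_eq_top, inf_top_eq]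
  · intro r s t
    rw [sup_sup_sup_comm, sup_idem]
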